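/- For all n ≥ 1 and k ≥ 0, the higher-order tangent number admits the explicit double-sum formula T(n,k) = (−1)^{(n−k)/2} · (−1)^n · (2^n / k!) · Σ_{α=k}^{n} Σ_{β=1}^{α} (−1)^β · C(α−1, k−1) · C(α, β) · β^n / 2^α. -/

import Mathlib

open Real Finset

/-- Tangent numbers: tan t = Σ Tₙ tⁿ/n!. -/
noncomputable def tangentNumber (n : ℕ) : ℝ := iteratedDeriv n Real.tan 0

/-- Secant numbers: sec t = Σ Sₙ tⁿ/n!. -/
noncomputable def secantNumber (n : ℕ) : ℝ := iteratedDeriv n (fun t : ℝ => 1 / Real.cos t) 0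

/-- Higher-order tangent numbers: tanᵏ t / k! = Σ T(n,k) tⁿ/n!. -/
noncomputable def T (n k : ℕ) : ℝ :=
  iteratedDeriv n (fun t : ℝ => Real.tan t ^ k) 0 / (Nat.factorial k : ℝ)

/-- Higher-order secant numbers: sec t · tanᵏ t / k! = Σ S(n,k) tⁿ/n!. -/
noncomputable def S (n k : ℕ) : ℝ :=
  iteratedDeriv n (fun t : ℝ => Real.tan t ^ k / Real.cos t) 0 / (Nat.factorial k : ℝ)

/-- Higher-order arctangent numbers: arctanᵏ t / k! = Σ T*(n,k) tⁿ/n!. -/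
noncomputable def Tstar (n k : ℕ) : ℝ :=
  iteratedDeriv n (fun t : ℝ => Real.arctan t ^ k) 0 / (Nat.factorial k : ℝ)

/-- Binomial coefficient with integer lower index (0 if lower index is negative). -/
noncomputable def chooseZ (a : ℕ) (b : ℤ) : ℝ :=
  if 0 ≤ b then (a.choose b.toNat : ℝ) else 0

/-! ### Auxiliary definitions -/

noncomputable def Ee (n α : ℕ) : ℝ :=
  ∑ β ∈ Finset.Icc 1 α, (-1 : ℝ) ^ β * (α.choose β : ℝ) * (β : ℝ) ^ n

noncomputable def Dd (n k : ℕ) : ℝ :=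
  ∑ α ∈ Finset.Icc k n, chooseZ (α - 1) ((k : ℤ) - 1) * (Ee n α / 2 ^ α)

noncomputable def Sgn (n k : ℕ) : ℝ := (-1 : ℝ) ^ ((n - k) / 2) * (-1 : ℝ) ^ n

/-! ### chooseZ lemmas -/

lemma chooseZ_of_pos (a : ℕ) {k : ℕ} (hk : 1 ≤ k) :
    chooseZ a ((k : ℤ) - 1) = (a.choose (k - 1) : ℝ) := by
  unfold chooseZ
  rw [if_pos (by omega)]
  have h : ((k : ℤ) - 1).toNat = k - 1 := by omega
  rw [h]

lemma chooseZ_neg_one (a : ℕ) : chooseZ a ((0 : ℤ) - 1) = 0 := by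
  unfold chooseZ
  norm_num

/-! ### E lemmas -/

lemma Ee_zero_right (n : ℕ) : Ee n 0 = 0 := by simp [Ee]

lemma Ee_zero_left {α : ℕ} (hα : 1 ≤ α) : Ee 0 α = -1 := by
  have halt : ∑ i ∈ Finset.range (α + 1), (-1 : ℝ) ^ i * (α.choose i : ℝ) = 0 := by
    have := Int.alternating_sum_range_choose (n := α)
    rw [if_neg (by omega)] at this
    exact_mod_cast congrArg (fun z : ℤ => (z : ℝ)) this
  have hins : Finset.range (α + 1) = insert 0 (Finset.Icc 1 α) := by
    ext x; simp; omega
  rw [hins, Finset.sum_insert (by simp)] at halt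
  simp only [pow_zero, Nat.choose_zero_right, Nat.cast_one, one_mul] at halt
  have : Ee 0 α = ∑ β ∈ Finset.Icc 1 α, (-1 : ℝ) ^ β * (α.choose β : ℝ) := by
    unfold Ee; apply Finset.sum_congr rfl; intro β _; ring
  linarith [this, halt]

lemma Ee_rec (n : ℕ) {α : ℕ} (hα : 1 ≤ α) :
    Ee (n + 1) α = α * (Ee n α - Ee n (α - 1)) := by
  obtain ⟨a, rfl⟩ : ∃ a, α = a + 1 := ⟨α - 1, by omega⟩
  simp only [Nat.add_sub_cancel]
  have hEa : Ee n a = ∑ β ∈ Finset.Icc 1 (a + 1), (-1 : ℝ) ^ β * (a.choose β : ℝ) * (β : ℝ) ^ n := by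
    rw [Finset.sum_Icc_succ_top (by omega : 1 ≤ a + 1)]
    rw [Nat.choose_eq_zero_of_lt (by omega)]
    simp [Ee]
  rw [hEa]
  unfold Ee
  rw [← Finset.sum_sub_distrib, Finset.mul_sum]
  apply Finset.sum_congr rfl
  intro β hβ
  simp only [Finset.mem_Icc] at hβ
  obtain ⟨b, rfl⟩ : ∃ b, β = b + 1 := ⟨β - 1, by omega⟩
  have h1 : ((a : ℝ) + 1) * (a.choose b : ℝ) = ((a + 1).choose (b + 1) : ℝ) * ((b : ℝ) + 1) := by
    exact_mod_cast Nat.add_one_mul_choose_eq a b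
  have h2 : ((a + 1).choose (b + 1) : ℝ) = (a.choose b : ℝ) + (a.choose (b + 1) : ℝ) := by
    exact_mod_cast Nat.choose_succ_succ' a b
  push_cast
  rw [pow_succ ((b : ℝ) + 1) n]
  linear_combination (-((-1 : ℝ) ^ (b + 1) * ((b : ℝ) + 1) ^ n)) * h1
    - ((a : ℝ) + 1) * ((-1 : ℝ) ^ (b + 1) * ((b : ℝ) + 1) ^ n) * h2

lemma Ee_vanish : ∀ n : ℕ, 1 ≤ n → ∀ α : ℕ, n < α → Ee n α = 0 := by
  intro n hn
  induction n with
  | zero => omega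
  | succ m ih =>
    intro α hα
    rcases Nat.eq_or_lt_of_le (by omega : 1 ≤ m + 1) with h1 | h1
    · -- m = 0, α ≥ 2
      have hm : m = 0 := by omega
      subst hm
      rw [Ee_rec 0 (by omega)]
      rw [Ee_zero_left (by omega), Ee_zero_left (by omega : 1 ≤ α - 1)]
      ring
    · have hm : 1 ≤ m := by omega
      rw [Ee_rec m (by omega)]
      rw [ih hm α (by omega), ih hm (α - 1) (by omega)]
      ring

/-! ### D lemmas -/

lemma Dd_zero_right (n : ℕ) : Dd n 0 = 0 := by
  unfold Dd
  apply Finset.sum_eq_zero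
  intro α _
  rw [show ((0 : ℕ) : ℤ) - 1 = (0 : ℤ) - 1 by norm_num, chooseZ_neg_one]
  ring

lemma Dd_eq_range {n k N : ℕ} (hn : 1 ≤ n) (hN : n + 1 ≤ N) :
    Dd n k = ∑ α ∈ Finset.range N, chooseZ (α - 1) ((k : ℤ) - 1) * (Ee n α / 2 ^ α) := by
  rcases Nat.eq_zero_or_pos k with hk | hk
  · subst hk
    rw [Dd_zero_right]
    symm
    apply Finset.sum_eq_zero
    intro α _
    rw [show ((0 : ℕ) : ℤ) - 1 = (0 : ℤ) - 1 by norm_num, chooseZ_neg_one]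
    ring
  · unfold Dd
    apply Finset.sum_subset
    · intro α hα
      simp only [Finset.mem_Icc] at hα
      simp only [Finset.mem_range]
      omega
    · intro α hα hα'
      simp only [Finset.mem_Icc] at hα'
      rcases (by omega : α < k ∨ n < α) with h | h
      · rcases Nat.eq_zero_or_pos α with h0 | h0
        · subst h0
          rcases Nat.eq_or_lt_of_le hk with h1 | h1
          · rw [← h1]
            simp [Ee_zero_right]
          · rw [chooseZ_of_pos _ hk, Nat.choose_eq_zero_of_lt (by omega)]
            simp
        · rw [chooseZ_of_pos _ hk, Nat.choose_eq_zero_of_lt (by omega)]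
          simp
      · rw [Ee_vanish n hn α h]
        ring

/-- The coefficient identity, valid for `a j : ℕ` meaning `α = a+1`, `k = j+2`. -/
lemma coeff_id (a j : ℕ) :
    2 * ((a : ℝ) + 1) * (a.choose (j + 1) : ℝ) + ((j : ℝ) + 2) * (a.choose j : ℝ) =
      ((a : ℝ) + 2) * ((a + 1).choose (j + 1) : ℝ) + ((j : ℝ) + 2) * (a.choose (j + 2) : ℝ) := by
  have h1 : ((a : ℝ) + 1) * (a.choose (j + 1) : ℝ)
      = ((a + 1).choose (j + 2) : ℝ) * ((j : ℝ) + 2) := by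
    exact_mod_cast Nat.add_one_mul_choose_eq a (j + 1)
  have h2 : ((a : ℝ) + 2) * ((a + 1).choose (j + 1) : ℝ)
      = ((a + 2).choose (j + 2) : ℝ) * ((j : ℝ) + 2) := by
    exact_mod_cast Nat.add_one_mul_choose_eq (a + 1) (j + 1)
  have h3 : ((a + 2).choose (j + 2) : ℝ)
      = ((a + 1).choose (j + 1) : ℝ) + ((a + 1).choose (j + 2) : ℝ) := by
    exact_mod_cast Nat.choose_succ_succ' (a + 1) (j + 1)
  have h4 : ((a + 1).choose (j + 2) : ℝ) = (a.choose (j + 1) : ℝ) + (a.choose (j + 2) : ℝ) := by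
    exact_mod_cast Nat.choose_succ_succ' a (j + 1)
  have h5 : ((a + 1).choose (j + 1) : ℝ) = (a.choose j : ℝ) + (a.choose (j + 1) : ℝ) := by
    exact_mod_cast Nat.choose_succ_succ' a j
  linear_combination 2 * h1 - h2 - ((j : ℝ) + 2) * h3 + ((j : ℝ) + 2) * h4 - ((j : ℝ) + 2) * h5

lemma Dd_eq_zero_of_lt {n k : ℕ} (h : n < k) : Dd n k = 0 := by
  unfold Dd
  rw [Finset.Icc_eq_empty (by omega)]
  simp

lemma star {n k : ℕ} (hn : 1 ≤ n) (hk : 1 ≤ k) :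
    2 * Dd (n + 1) k = k * Dd n (k + 1) - k * Dd n (k - 1) := by
  rw [Dd_eq_range (show 1 ≤ n + 1 by omega) (show n + 1 + 1 ≤ n + 2 by omega),
      Dd_eq_range hn (show n + 1 ≤ n + 2 by omega),
      Dd_eq_range hn (show n + 1 ≤ n + 2 by omega)]
  have hL : ∑ α ∈ Finset.range (n + 2), chooseZ (α - 1) ((k : ℤ) - 1) * (Ee (n + 1) α / 2 ^ α)
      = (∑ α ∈ Finset.range (n + 2), (α : ℝ) * chooseZ (α - 1) ((k : ℤ) - 1) * (Ee n α / 2 ^ α))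
        - ∑ α ∈ Finset.range (n + 2),
            (α : ℝ) * chooseZ (α - 1) ((k : ℤ) - 1) * (Ee n (α - 1) / 2 ^ α) := by
    rw [← Finset.sum_sub_distrib]
    apply Finset.sum_congr rfl
    intro α _
    rcases Nat.eq_zero_or_pos α with h0 | h0
    · subst h0; simp [Ee_zero_right]
    · rw [Ee_rec n h0]; ring
  have hA2 : (∑ α ∈ Finset.range (n + 2),
        (α : ℝ) * chooseZ (α - 1) ((k : ℤ) - 1) * (Ee n (α - 1) / 2 ^ α))
      = ∑ α ∈ Finset.range (n + 2),
          ((α : ℝ) + 1) * chooseZ α ((k : ℤ) - 1) * (Ee n α / 2 ^ (α + 1)) := by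
    rw [Finset.sum_range_succ'
      (fun α => (α : ℝ) * chooseZ (α - 1) ((k : ℤ) - 1) * (Ee n (α - 1) / 2 ^ α)) (n + 1)]
    rw [Finset.sum_range_succ
      (fun α => ((α : ℝ) + 1) * chooseZ α ((k : ℤ) - 1) * (Ee n α / 2 ^ (α + 1))) (n + 1)]
    rw [Ee_vanish n hn (n + 1) (by omega)]
    simp only [Nat.cast_zero, zero_mul, add_zero, zero_div, mul_zero]
    apply Finset.sum_congr rfl
    intro i _
    have e1 : i + 1 - 1 = i := by omega
    rw [e1]
    push_cast
    ring
  rw [hL, hA2, mul_sub, Finset.mul_sum, Finset.mul_sum, Finset.mul_sum, Finset.mul_sum,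
    ← Finset.sum_sub_distrib, ← Finset.sum_sub_distrib]
  apply Finset.sum_congr rfl
  intro α _
  rcases Nat.eq_zero_or_pos α with h0 | h0
  · subst h0; simp [Ee_zero_right]
  obtain ⟨a, rfl⟩ : ∃ a, α = a + 1 := ⟨α - 1, by omega⟩
  have e1 : a + 1 - 1 = a := by omega
  rw [e1, chooseZ_of_pos a hk, chooseZ_of_pos (a + 1) hk,
    chooseZ_of_pos a (show 1 ≤ k + 1 by omega)]
  have e2 : k + 1 - 1 = k := by omega
  rw [e2]
  rcases Nat.eq_or_lt_of_le hk with h1 | h1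
  · -- k = 1
    obtain rfl : k = 1 := h1.symm
    have e3 : ((1 - 1 : ℕ) : ℤ) - 1 = (0 : ℤ) - 1 := by norm_num
    rw [e3, chooseZ_neg_one]
    simp only [Nat.choose_one_right, Nat.choose_zero_right, Nat.sub_self]
    push_cast
    ring
  · -- k ≥ 2
    obtain ⟨j, rfl⟩ : ∃ j, k = j + 2 := ⟨k - 2, by omega⟩
    rw [chooseZ_of_pos a (show 1 ≤ j + 2 - 1 by omega)]
    have e4 : j + 2 - 1 = j + 1 := by omega
    have e5 : j + 1 - 1 = j := by omega
    rw [e4, e5]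
    have hcid := coeff_id a j
    push_cast
    linear_combination (Ee n (a + 1) / 2 ^ (a + 1)) * hcid

/-! ### Sign lemmas -/

lemma Sgn_A {k : ℕ} (hk : 1 ≤ k) (n : ℕ) : Sgn n (k - 1) = -Sgn (n + 1) k := by
  unfold Sgn
  have h : n - (k - 1) = n + 1 - k := by omega
  rw [h, pow_succ]
  ring

lemma Sgn_B {n k : ℕ} (hk : k + 1 ≤ n) : Sgn (n + 1) k = Sgn n (k + 1) := by
  unfold Sgn
  have h : n + 1 - k = n - (k + 1) + 2 := by omega
  rw [h]
  have h2 : (n - (k + 1) + 2) / 2 = (n - (k + 1)) / 2 + 1 := by omega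
  rw [h2, pow_succ, pow_succ]
  ring

/-! ### Analytic lemmas -/

open Topology in
lemma iter_within_eq {n : ℕ} {f : ℝ → ℝ} {s : Set ℝ} (hs : IsOpen s) {x : ℝ} (hx : x ∈ s) :
    iteratedDerivWithin n f s x = iteratedDeriv n f x := by
  simp only [iteratedDerivWithin, iteratedDeriv, iteratedFDerivWithin_of_isOpen n hs hx]

lemma iter_zero_fun : ∀ n : ℕ, iteratedDeriv n (fun _ : ℝ => (0 : ℝ)) 0 = 0 := by
  intro n
  induction n with
  | zero => simp [iteratedDeriv_zero]
  | succ m ih =>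
    rw [iteratedDeriv_succ', show (deriv fun _ : ℝ => (0 : ℝ)) = fun _ : ℝ => (0 : ℝ) from
      deriv_const' 0]
    exact ih

lemma cos_ne_open : IsOpen {x : ℝ | Real.cos x ≠ 0} :=
  IsOpen.preimage Real.continuous_cos isOpen_ne

lemma iter_tan_pow_succ (n k : ℕ) :
    iteratedDeriv (n + 1) (fun t : ℝ => Real.tan t ^ k) 0
      = k * iteratedDeriv n (fun t : ℝ => Real.tan t ^ (k - 1)) 0
        + k * iteratedDeriv n (fun t : ℝ => Real.tan t ^ (k + 1)) 0 := by
  rcases Nat.eq_zero_or_pos k with hk | hk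
  · subst hk
    simp only [pow_zero, Nat.cast_zero, zero_mul, add_zero]
    rw [iteratedDeriv_succ', show (deriv fun _ : ℝ => (1 : ℝ)) = fun _ : ℝ => (0 : ℝ) from
      deriv_const' 1]
    exact iter_zero_fun n
  · have h0mem : (0 : ℝ) ∈ {x : ℝ | Real.cos x ≠ 0} := by
      simp [Real.cos_zero]
    have hev : (deriv fun t : ℝ => Real.tan t ^ k) =ᶠ[nhds (0 : ℝ)]
        fun t => (k : ℝ) * Real.tan t ^ (k - 1) + (k : ℝ) * Real.tan t ^ (k + 1) := by
      filter_upwards [cos_ne_open.mem_nhds h0mem] with x hx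
      have hx' : Real.cos x ≠ 0 := hx
      have hd : HasDerivAt (fun t : ℝ => Real.tan t ^ k)
          ((k : ℝ) * Real.tan x ^ (k - 1) * (1 / Real.cos x ^ 2)) x :=
        (Real.hasDerivAt_tan hx').pow k
      rw [hd.deriv]
      have h1 : 1 / Real.cos x ^ 2 = 1 + Real.tan x ^ 2 := by
        rw [one_div, ← Real.inv_one_add_tan_sq hx', inv_inv]
      rw [h1]
      have h2 : Real.tan x ^ (k - 1) * Real.tan x ^ 2 = Real.tan x ^ (k + 1) := by
        rw [← pow_add]
        congr 1
        omega
      calc (k : ℝ) * Real.tan x ^ (k - 1) * (1 + Real.tan x ^ 2)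
          = (k : ℝ) * Real.tan x ^ (k - 1)
            + (k : ℝ) * (Real.tan x ^ (k - 1) * Real.tan x ^ 2) := by ring
        _ = (k : ℝ) * Real.tan x ^ (k - 1) + (k : ℝ) * Real.tan x ^ (k + 1) := by rw [h2]
    rw [iteratedDeriv_succ', Filter.EventuallyEq.iteratedDeriv_eq n hev]
    have hs : IsOpen {x : ℝ | Real.cos x ≠ 0} := cos_ne_open
    have hcd : ∀ m : ℕ, ContDiffOn ℝ n (fun t : ℝ => Real.tan t ^ m) {x : ℝ | Real.cos x ≠ 0} := by
      intro m x hx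
      exact ((Real.contDiffAt_tan.mpr hx).pow m).contDiffWithinAt
    have hcd1 : ContDiffOn ℝ n (fun t : ℝ => (k : ℝ) * Real.tan t ^ (k - 1))
        {x : ℝ | Real.cos x ≠ 0} := contDiffOn_const.mul (hcd (k - 1))
    have hcd2 : ContDiffOn ℝ n (fun t : ℝ => (k : ℝ) * Real.tan t ^ (k + 1))
        {x : ℝ | Real.cos x ≠ 0} := contDiffOn_const.mul (hcd (k + 1))
    rw [← iter_within_eq hs h0mem]
    have hfg : (fun t : ℝ => (k : ℝ) * Real.tan t ^ (k - 1) + (k : ℝ) * Real.tan t ^ (k + 1))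
        = (fun t : ℝ => (k : ℝ) * Real.tan t ^ (k - 1))
          + fun t : ℝ => (k : ℝ) * Real.tan t ^ (k + 1) := rfl
    rw [hfg, iteratedDerivWithin_add h0mem hs.uniqueDiffOn (hcd1 0 h0mem) (hcd2 0 h0mem),
      iteratedDerivWithin_const_mul h0mem hs.uniqueDiffOn _ (hcd (k - 1) 0 h0mem),
      iteratedDerivWithin_const_mul h0mem hs.uniqueDiffOn _ (hcd (k + 1) 0 h0mem),
      iter_within_eq hs h0mem, iter_within_eq hs h0mem]

lemma main_lemma : ∀ n : ℕ, 1 ≤ n → ∀ k : ℕ,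
    iteratedDeriv n (fun t : ℝ => Real.tan t ^ k) 0 = Sgn n k * 2 ^ n * Dd n k := by
  intro n hn
  induction n, hn using Nat.le_induction with
  | base =>
    intro k
    rw [show iteratedDeriv 1 (fun t : ℝ => Real.tan t ^ k) 0 = iteratedDeriv (0 + 1) (fun t : ℝ => Real.tan t ^ k) 0 from rfl, iter_tan_pow_succ 0 k]
    simp only [iteratedDeriv_zero, Real.tan_zero]
    rcases Nat.lt_or_ge k 2 with hk | hk
    · interval_cases k
      · simp [Dd_zero_right, Sgn]
      · have h1 : Dd 1 1 = -1 / 2 := by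
          unfold Dd Ee
          rw [Finset.Icc_self, Finset.sum_singleton, Finset.Icc_self, Finset.sum_singleton]
          rw [chooseZ_of_pos 0 le_rfl]
          norm_num
        rw [h1]
        have h2 : Sgn 1 1 = -1 := by unfold Sgn; norm_num
        rw [h2]
        norm_num
    · rw [Dd_eq_zero_of_lt (by omega), zero_pow (by omega : k - 1 ≠ 0),
        zero_pow (by omega : k + 1 ≠ 0)]
      ring
  | succ n hn ih =>
    intro k
    rw [iter_tan_pow_succ n k, ih (k - 1), ih (k + 1)]
    rcases Nat.eq_zero_or_pos k with hk | hk
    · subst hk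
      rw [Dd_zero_right (n + 1)]
      simp
    · have hstar := star hn hk
      have hA := Sgn_A hk n
      rcases Nat.lt_or_ge n (k + 1) with hcase | hcase
      · have hD : Dd n (k + 1) = 0 := Dd_eq_zero_of_lt hcase
        rw [hA]
        linear_combination (-(Sgn (n + 1) k) * 2 ^ n) * hstar
          + ((k : ℝ) * 2 ^ n * (Sgn n (k + 1) - Sgn (n + 1) k)) * hD
      · have hB := Sgn_B hcase
        rw [hA, ← hB]
        linear_combination (-(Sgn (n + 1) k) * 2 ^ n) * hstar

theorem stmt14 (n k : ℕ) (hn : 1 ≤ n) :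
    T n k = (-1 : ℝ) ^ ((n - k) / 2) * (-1 : ℝ) ^ n *
      ((2 : ℝ) ^ n / (k.factorial : ℝ)) *
      ∑ α ∈ Finset.Icc k n, ∑ β ∈ Finset.Icc 1 α,
        (-1 : ℝ) ^ β * chooseZ (α - 1) ((k : ℤ) - 1) * (α.choose β : ℝ) *
          (β : ℝ) ^ n / 2 ^ α := by
  have hsum : (∑ α ∈ Finset.Icc k n, ∑ β ∈ Finset.Icc 1 α,
      (-1 : ℝ) ^ β * chooseZ (α - 1) ((k : ℤ) - 1) * (α.choose β : ℝ) *
        (β : ℝ) ^ n / 2 ^ α) = Dd n k := by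
    unfold Dd Ee
    apply Finset.sum_congr rfl
    intro α _
    rw [Finset.sum_div, Finset.mul_sum]
    apply Finset.sum_congr rfl
    intro β _
    ring
  rw [hsum]
  unfold T
  rw [main_lemma n hn k]
  unfold Sgn
  ring
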